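/- Let 0 < q₀ < q₁ ≤ ∞ and let b₀, b₁ be slowly varying functions on (0,∞). Then there is no positive function w on (0,∞) such that both w(t) ≲ b₀(t)/b₁(t) for all t > 0 and (∫₀^t (b₀(s)/b₁(s))^{q₀q₁/(q₀-q₁)} ds/s)^{1/q₁ - 1/q₀} ≲ w(t) for all t > 0 (with the convention that for q₁ = ∞ the second condition is replaced by (∫₀^t (b₀(s)/b₁(s))^{q₀r/(q₀-r)} ds/s)^{1/r - 1/q₀} ≲ w(t) for some r with q₀ < r < ∞). Equivalently, the inequality (∫₀^t (b₀(s)/b₁(s))^{q₀q₁/(q₀-q₁)} ds/s)^{1/q₁-1/q₀} ≲ b₀(t)/b₁(t) cannot hold for all t > 0. -/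

import Mathlib

/-- A measurable function `b : (0,∞) → (0,∞)` is slowly varying if for every `ε > 0`,
`t^ε b(t)` is equivalent (up to positive multiplicative constants) to a positive
non-decreasing function and `t^{-ε} b(t)` is equivalent to a positive non-increasing
function on `(0,∞)`. -/
def SlowlyVarying (b : ℝ → ℝ) : Prop :=
  Measurable b ∧ (∀ t : ℝ, 0 < t → 0 < b t) ∧
  ∀ ε : ℝ, 0 < ε →
    (∃ g : ℝ → ℝ, (∀ t : ℝ, 0 < t → 0 < g t) ∧ MonotoneOn g (Set.Ioi 0) ∧
      ∃ c C : ℝ, 0 < c ∧ 0 < C ∧ ∀ t : ℝ, 0 < t →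
        c * g t ≤ t ^ ε * b t ∧ t ^ ε * b t ≤ C * g t) ∧
    (∃ g : ℝ → ℝ, (∀ t : ℝ, 0 < t → 0 < g t) ∧ AntitoneOn g (Set.Ioi 0) ∧
      ∃ c C : ℝ, 0 < c ∧ 0 < C ∧ ∀ t : ℝ, 0 < t →
        c * g t ≤ t ^ (-ε) * b t ∧ t ^ (-ε) * b t ≤ C * g t)

open MeasureTheory Set ENNReal

/-- upper bound on doubling scale: b s ≤ K b t for t ≤ s ≤ 2t -/
lemma sv_upper_double {b : ℝ → ℝ} (hb : SlowlyVarying b) :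
    ∃ K : ℝ, 0 < K ∧ ∀ t s : ℝ, 0 < t → t ≤ s → s ≤ 2 * t → b s ≤ K * b t := by
  obtain ⟨-, hbpos, h⟩ := hb
  obtain ⟨-, g, gpos, ganti, c, C, hc, hC, H⟩ := h 1 one_pos
  refine ⟨2 * C / c, by positivity, fun t s ht hts hs2t => ?_⟩
  have hs : 0 < s := lt_of_lt_of_le ht hts
  have h1 := (H s hs).2
  have h2 := (H t ht).1
  rw [Real.rpow_neg_one] at h1 h2
  have hgts : g s ≤ g t := ganti ht (lt_of_lt_of_le ht hts) hts
  -- s⁻¹ * b s ≤ C * g s ≤ C * g t ≤ (C/c) * (t⁻¹ * b t)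
  have key : s⁻¹ * b s ≤ C / c * (t⁻¹ * b t) := by
    have : c * g s ≤ c * g t := by nlinarith
    calc s⁻¹ * b s ≤ C * g s := h1
      _ ≤ C * g t := by nlinarith [gpos s hs, gpos t ht]
      _ ≤ C / c * (t⁻¹ * b t) := by
        rw [div_mul_eq_mul_div, le_div_iff₀ hc]; nlinarith
  have hbt := hbpos t ht
  have hbs := hbpos s hs
  have : b s ≤ s * (C / c * (t⁻¹ * b t)) := by
    refine le_of_mul_le_mul_left ?_ (inv_pos.mpr hs) ; calc s⁻¹ * b s ≤ C / c * (t⁻¹ * b t) := key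
      _ = s⁻¹ * (s * (C / c * (t⁻¹ * b t))) := by field_simp
  calc b s ≤ s * (C / c * (t⁻¹ * b t)) := this
    _ ≤ 2 * t * (C / c * (t⁻¹ * b t)) := by
        have : (0:ℝ) < C / c * (t⁻¹ * b t) := by positivity
        nlinarith
    _ = 2 * C / c * b t := by field_simp

/-- lower bound on doubling scale: k b t ≤ b s for t ≤ s ≤ 2t -/
lemma sv_lower_double {b : ℝ → ℝ} (hb : SlowlyVarying b) :
    ∃ k : ℝ, 0 < k ∧ ∀ t s : ℝ, 0 < t → t ≤ s → s ≤ 2 * t → k * b t ≤ b s := by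
  obtain ⟨-, hbpos, h⟩ := hb
  obtain ⟨g, gpos, gmono, c, C, hc, hC, H⟩ := (h 1 one_pos).1
  refine ⟨c / (2 * C), by positivity, fun t s ht hts hs2t => ?_⟩
  have hs : 0 < s := lt_of_lt_of_le ht hts
  have h1 := (H s hs).1
  have h2 := (H t ht).2
  rw [Real.rpow_one] at h1 h2
  have hgts : g t ≤ g s := gmono (Set.mem_Ioi.mpr ht) (Set.mem_Ioi.mpr hs) hts
  have hbt := hbpos t ht
  have hbs := hbpos s hs
  have key : c * (t * b t) ≤ C * (s * b s) := by
    have e1 := mul_le_mul_of_nonneg_left h2 hc.le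
    have e2 := mul_le_mul_of_nonneg_left h1 hC.le
    have e3 := mul_le_mul_of_nonneg_left hgts (mul_nonneg hc.le hC.le)
    nlinarith
  rw [div_mul_eq_mul_div, div_le_iff₀ (by positivity)]
  nlinarith [mul_nonneg (mul_nonneg hC.le hbs.le) (sub_nonneg.mpr hs2t)]

/-- growth bound: b t ≤ M t^η for t ≥ 1 -/
lemma sv_growth {b : ℝ → ℝ} (hb : SlowlyVarying b) (η : ℝ) (hη : 0 < η) :
    ∃ M : ℝ, 0 < M ∧ ∀ t : ℝ, 1 ≤ t → b t ≤ M * t ^ η := by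
  obtain ⟨-, hbpos, h⟩ := hb
  obtain ⟨-, g, gpos, ganti, c, C, hc, hC, H⟩ := h η hη
  have hb1 := hbpos 1 one_pos
  refine ⟨C / c * b 1, by positivity, fun t ht => ?_⟩
  have ht0 : (0:ℝ) < t := lt_of_lt_of_le one_pos ht
  have h1 := (H t ht0).2
  have h2 := (H 1 one_pos).1
  rw [Real.one_rpow, one_mul] at h2
  have hg1 : g 1 ≤ b 1 / c := by rw [le_div_iff₀ hc]; linarith
  have hgt : g t ≤ g 1 := ganti (Set.mem_Ioi.mpr one_pos) (Set.mem_Ioi.mpr ht0) ht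
  have htη : (0:ℝ) < t ^ η := Real.rpow_pos_of_pos ht0 η
  have key : t ^ (-η) * b t ≤ C / c * b 1 := by
    calc t ^ (-η) * b t ≤ C * g t := h1
      _ ≤ C * g 1 := by nlinarith [gpos t ht0, gpos 1 one_pos]
      _ ≤ C / c * b 1 := by rw [div_mul_eq_mul_div, le_div_iff₀ hc]; nlinarith
  rw [Real.rpow_neg ht0.le] at key
  have key2 := mul_le_mul_of_nonneg_left key htη.le
  calc b t = t ^ η * ((t ^ η)⁻¹ * b t) := by field_simp
    _ ≤ t ^ η * (C / c * b 1) := key2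
    _ = C / c * b 1 * t ^ η := by ring

/-- lower growth bound: m t^(-η) ≤ b t for t ≥ 1 -/
lemma sv_lower_growth {b : ℝ → ℝ} (hb : SlowlyVarying b) (η : ℝ) (hη : 0 < η) :
    ∃ m : ℝ, 0 < m ∧ ∀ t : ℝ, 1 ≤ t → m * t ^ (-η) ≤ b t := by
  obtain ⟨-, hbpos, h⟩ := hb
  obtain ⟨g, gpos, gmono, c, C, hc, hC, H⟩ := (h η hη).1
  have hb1 := hbpos 1 one_pos
  refine ⟨c / C * b 1, by positivity, fun t ht => ?_⟩
  have ht0 : (0:ℝ) < t := lt_of_lt_of_le one_pos ht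
  have h1 := (H t ht0).1
  have h2 := (H 1 one_pos).2
  rw [Real.one_rpow, one_mul] at h2
  have hg1 : b 1 / C ≤ g 1 := by rw [div_le_iff₀ hC]; linarith
  have hgt : g 1 ≤ g t := gmono (Set.mem_Ioi.mpr one_pos) (Set.mem_Ioi.mpr ht0) ht
  have htη : (0:ℝ) < t ^ η := Real.rpow_pos_of_pos ht0 η
  have key : c / C * b 1 ≤ t ^ η * b t := by
    calc c / C * b 1 ≤ c * g 1 := by rw [div_mul_eq_mul_div, div_le_iff₀ hC]; nlinarith
      _ ≤ c * g t := by nlinarith [gpos 1 one_pos, gpos t ht0]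
      _ ≤ t ^ η * b t := h1
  rw [Real.rpow_neg ht0.le]
  have key2 := mul_le_mul_of_nonneg_right key (inv_nonneg.mpr htη.le)
  calc c / C * b 1 * (t ^ η)⁻¹ ≤ t ^ η * b t * (t ^ η)⁻¹ := key2
    _ = b t := by field_simp


/-- Impossibility at the heart of Theorem 3.6: for `0 < q₀ < q₁ < ∞` and slowly varying
`b₀, b₁`, with `p = q₀q₁/(q₀-q₁) < 0`, one cannot have
`∫₀^t (b₀(s)/b₁(s))^p ds/s ≲ (b₀(t)/b₁(t))^p` for all `t > 0`. -/
theorem no_holmstedt_weight (q₀ q₁ : ℝ) (hq₀ : 0 < q₀) (hq₀₁ : q₀ < q₁)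
    (b₀ b₁ : ℝ → ℝ) (hb₀ : SlowlyVarying b₀) (hb₁ : SlowlyVarying b₁) :
    ¬ ∃ C : ℝ, 0 < C ∧ ∀ t : ℝ, 0 < t →
      (∫⁻ s in Set.Ioc (0:ℝ) t,
          ENNReal.ofReal ((b₀ s / b₁ s) ^ (q₀ * q₁ / (q₀ - q₁)) / s)) ≤
        ENNReal.ofReal (C * (b₀ t / b₁ t) ^ (q₀ * q₁ / (q₀ - q₁))) := by
  rintro ⟨C, hC, hyp⟩
  set p := q₀ * q₁ / (q₀ - q₁) with hp_def
  have hq₁ : 0 < q₁ := hq₀.trans hq₀₁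
  have hp : p < 0 := div_neg_of_pos_of_neg (by positivity) (by linarith)
  set F : ℝ → ℝ≥0∞ :=
    fun t => ∫⁻ s in Set.Ioc (0:ℝ) t, ENNReal.ofReal ((b₀ s / b₁ s) ^ p / s) with hF_def
  have hb₀pos : ∀ t : ℝ, 0 < t → 0 < b₀ t := hb₀.2.1
  have hb₁pos : ∀ t : ℝ, 0 < t → 0 < b₁ t := hb₁.2.1
  have hρpos : ∀ t : ℝ, 0 < t → 0 < b₀ t / b₁ t :=
    fun t ht => div_pos (hb₀pos t ht) (hb₁pos t ht)
  obtain ⟨K₀, hK₀, HK₀⟩ := sv_upper_double hb₀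
  obtain ⟨k₁, hk₁, Hk₁⟩ := sv_lower_double hb₁
  set K : ℝ := K₀ / k₁ with hK_def
  have hK : 0 < K := by positivity
  have hratio : ∀ t s : ℝ, 0 < t → t ≤ s → s ≤ 2 * t →
      b₀ s / b₁ s ≤ K * (b₀ t / b₁ t) := by
    intro t s ht hts h2
    have hs : 0 < s := lt_of_lt_of_le ht hts
    have e1 := HK₀ t s ht hts h2
    have e2 := Hk₁ t s ht hts h2
    have hbt₀ := hb₀pos t ht
    have hbt₁ := hb₁pos t ht
    calc b₀ s / b₁ s ≤ (K₀ * b₀ t) / (k₁ * b₁ t) :=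
          div_le_div₀ (by positivity) e1 (by positivity) e2
      _ = K * (b₀ t / b₁ t) := by rw [hK_def]; field_simp
  -- Step inequality
  have hstep : ∀ t : ℝ, 0 < t →
      F t + ENNReal.ofReal (K ^ p * (b₀ t / b₁ t) ^ p / 2) ≤ F (2 * t) := by
    intro t ht
    have hsplit : F (2 * t) = F t +
        ∫⁻ s in Set.Ioc t (2 * t), ENNReal.ofReal ((b₀ s / b₁ s) ^ p / s) := by
      rw [hF_def]
      simp only
      rw [← Set.Ioc_union_Ioc_eq_Ioc ht.le (by linarith : t ≤ 2 * t),
        lintegral_union measurableSet_Ioc (Set.Ioc_disjoint_Ioc_of_le le_rfl)]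
    have hconst : ∫⁻ _ in Set.Ioc t (2 * t),
        ENNReal.ofReal (K ^ p * (b₀ t / b₁ t) ^ p / (2 * t)) =
        ENNReal.ofReal (K ^ p * (b₀ t / b₁ t) ^ p / 2) := by
      have hKρ : 0 < K ^ p * (b₀ t / b₁ t) ^ p :=
        mul_pos (Real.rpow_pos_of_pos hK p) (Real.rpow_pos_of_pos (hρpos t ht) p)
      rw [setLIntegral_const, Real.volume_Ioc,
        ← ENNReal.ofReal_mul (le_of_lt (div_pos hKρ (by linarith)))]
      congr 1
      rw [show 2 * t - t = t by ring]
      field_simp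
    have hlow : ENNReal.ofReal (K ^ p * (b₀ t / b₁ t) ^ p / 2) ≤
        ∫⁻ s in Set.Ioc t (2 * t), ENNReal.ofReal ((b₀ s / b₁ s) ^ p / s) := by
      rw [← hconst]
      apply setLIntegral_mono' measurableSet_Ioc
      intro s hs
      obtain ⟨hts, hs2t⟩ := hs
      have hs0 : 0 < s := ht.trans hts
      apply ENNReal.ofReal_le_ofReal
      have hρs : (K * (b₀ t / b₁ t)) ^ p ≤ (b₀ s / b₁ s) ^ p :=
        Real.rpow_le_rpow_of_nonpos (hρpos s hs0)
          (hratio t s ht hts.le hs2t) hp.le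
      rw [Real.mul_rpow hK.le (hρpos t ht).le] at hρs
      exact div_le_div₀ (Real.rpow_pos_of_pos (hρpos s hs0) p).le hρs hs0 hs2t
    rw [hsplit]
    exact add_le_add le_rfl hlow
  have hFfin : ∀ t : ℝ, 0 < t → F t ≠ ⊤ :=
    fun t ht => ne_top_of_le_ne_top ENNReal.ofReal_ne_top (hyp t ht)
  -- geometric growth
  set θ : ℝ := K ^ p / (2 * C) with hθ_def
  have hKp : 0 < K ^ p := Real.rpow_pos_of_pos hK p
  have hθ : 0 < θ := by positivity
  have hgrow : ∀ t : ℝ, 0 < t → ENNReal.ofReal (1 + θ) * F t ≤ F (2 * t) := by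
    intro t ht
    have h1 : ENNReal.ofReal (K ^ p * (b₀ t / b₁ t) ^ p / 2) =
        ENNReal.ofReal θ * ENNReal.ofReal (C * (b₀ t / b₁ t) ^ p) := by
      rw [← ENNReal.ofReal_mul hθ.le]
      congr 1
      rw [hθ_def]
      field_simp
    have h2 : ENNReal.ofReal θ * ENNReal.ofReal (C * (b₀ t / b₁ t) ^ p) ≥
        ENNReal.ofReal θ * F t := mul_le_mul_of_nonneg_left (hyp t ht) (zero_le)
    have h3 := hstep t ht
    rw [h1] at h3
    calc ENNReal.ofReal (1 + θ) * F t
        = (1 + ENNReal.ofReal θ) * F t := by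
          rw [ENNReal.ofReal_add (by norm_num) hθ.le, ENNReal.ofReal_one]
      _ = F t + ENNReal.ofReal θ * F t := by rw [add_mul, one_mul]
      _ ≤ F t + ENNReal.ofReal θ * ENNReal.ofReal (C * (b₀ t / b₁ t) ^ p) :=
          add_le_add le_rfl h2
      _ ≤ F (2 * t) := h3
  have hiter : ∀ n : ℕ, ENNReal.ofReal ((1 + θ) ^ n) * F 1 ≤ F (2 ^ n) := by
    intro n
    induction n with
    | zero => simp
    | succ n ih =>
      have h1 : (2:ℝ) ^ (n + 1) = 2 * 2 ^ n := by ring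
      rw [h1]
      calc ENNReal.ofReal ((1 + θ) ^ (n + 1)) * F 1
          = ENNReal.ofReal (1 + θ) * (ENNReal.ofReal ((1 + θ) ^ n) * F 1) := by
            rw [pow_succ, mul_comm ((1+θ)^n), ENNReal.ofReal_mul (by positivity)]
            ring
        _ ≤ ENNReal.ofReal (1 + θ) * F (2 ^ n) := mul_le_mul_of_nonneg_left ih (zero_le)
        _ ≤ F (2 * 2 ^ n) := hgrow _ (by positivity)
  -- F 1 > 0
  have hF1pos : 0 < F 1 := by
    have h := hstep (1/2) (by norm_num)
    rw [show 2 * (1/2 : ℝ) = 1 by norm_num] at h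
    have h2 : (0:ℝ≥0∞) < ENNReal.ofReal (K ^ p * (b₀ (1/2) / b₁ (1/2)) ^ p / 2) := by
      apply ENNReal.ofReal_pos.mpr
      have h0 := Real.rpow_pos_of_pos (hρpos (1/2) (by norm_num)) p
      exact div_pos (mul_pos hKp h0) (by norm_num)
    calc (0:ℝ≥0∞) < ENNReal.ofReal (K ^ p * (b₀ (1/2) / b₁ (1/2)) ^ p / 2) := h2
      _ ≤ F (1/2) + ENNReal.ofReal (K ^ p * (b₀ (1/2) / b₁ (1/2)) ^ p / 2) := le_add_self
      _ ≤ F 1 := h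
  -- choose ε with 2^ε < 1 + θ
  set ε : ℝ := Real.logb 2 (1 + θ) * 2⁻¹ with hε_def
  have hε : 0 < ε := by
    have hl : (0:ℝ) < Real.logb 2 (1 + θ) :=
      Real.logb_pos (by norm_num) (by linarith)
    exact mul_pos hl (by norm_num)
  have h2ε : (2:ℝ) ^ ε = (1 + θ) ^ (2⁻¹ : ℝ) := by
    rw [hε_def, Real.rpow_mul (by norm_num : (0:ℝ) ≤ 2),
      Real.rpow_logb (by norm_num) (by norm_num) (by linarith)]
  have h2εlt : (2:ℝ) ^ ε < 1 + θ := by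
    rw [h2ε]
    calc (1 + θ) ^ (2⁻¹ : ℝ) < (1 + θ) ^ (1 : ℝ) :=
        Real.rpow_lt_rpow_of_exponent_lt (by linarith) (by norm_num)
      _ = 1 + θ := Real.rpow_one _
  have h2εpos : (0:ℝ) < 2 ^ ε := Real.rpow_pos_of_pos (by norm_num) ε
  -- growth of ρ^p
  have hpne : -p ≠ 0 := by linarith
  set η : ℝ := ε / (2 * (-p)) with hη_def
  have hη : 0 < η := by
    rw [hη_def]
    apply div_pos hε (by linarith)
  have hexp : 2 * η * (-p) = ε := by
    rw [hη_def]
    field_simp [hp.ne]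
  obtain ⟨M₁, hM₁, HM₁⟩ := sv_growth hb₁ η hη
  obtain ⟨m₀, hm₀, Hm₀⟩ := sv_lower_growth hb₀ η hη
  have hub : ∀ t : ℝ, 1 ≤ t →
      (b₀ t / b₁ t) ^ p ≤ (M₁ / m₀) ^ (-p) * t ^ ε := by
    intro t ht
    have ht0 : (0:ℝ) < t := lt_of_lt_of_le one_pos ht
    have hbt₀ := hb₀pos t ht0
    have hbt₁ := hb₁pos t ht0
    have h1 : b₁ t / b₀ t ≤ (M₁ / m₀) * t ^ (2 * η) := by
      have e1 := HM₁ t ht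
      have e2 := Hm₀ t ht
      have htpos : (0:ℝ) < t ^ (-η) := Real.rpow_pos_of_pos ht0 _
      calc b₁ t / b₀ t ≤ (M₁ * t ^ η) / (m₀ * t ^ (-η)) :=
            div_le_div₀ (by positivity) e1 (by positivity) e2
        _ = (M₁ / m₀) * t ^ (2 * η) := by
            rw [show (2 * η) = η - (-η) by ring, Real.rpow_sub ht0]
            field_simp
    have h2 : (b₀ t / b₁ t) ^ p = (b₁ t / b₀ t) ^ (-p) := by
      rw [Real.rpow_neg (by positivity), ← Real.inv_rpow (by positivity), inv_div]
    rw [h2]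
    calc (b₁ t / b₀ t) ^ (-p) ≤ ((M₁ / m₀) * t ^ (2 * η)) ^ (-p) :=
        Real.rpow_le_rpow (by positivity) h1 (by linarith)
      _ = (M₁ / m₀) ^ (-p) * t ^ ε := by
          rw [Real.mul_rpow (by positivity) (Real.rpow_pos_of_pos ht0 _).le,
            ← Real.rpow_mul ht0.le, hexp]
  -- final contradiction
  set A : ℝ := (F 1).toReal with hA_def
  have hA : 0 < A := ENNReal.toReal_pos hF1pos.ne' (hFfin 1 one_pos)
  set B : ℝ := C * (M₁ / m₀) ^ (-p) with hB_def
  have hBpos : 0 < B := mul_pos hC (Real.rpow_pos_of_pos (by positivity) _)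
  have hfinal : ∀ n : ℕ, (1 + θ) ^ n * A ≤ B * (2 ^ ε) ^ n := by
    intro n
    have h2n : (1:ℝ) ≤ 2 ^ n := one_le_pow₀ (by norm_num : (1:ℝ) ≤ 2)
    have h2n0 : (0:ℝ) < 2 ^ n := by positivity
    have key : ENNReal.ofReal ((1 + θ) ^ n) * F 1 ≤
        ENNReal.ofReal (B * (2 ^ ε) ^ n) := by
      refine (hiter n).trans ((hyp (2 ^ n) h2n0).trans (ENNReal.ofReal_le_ofReal ?_))
      have h1 := hub (2 ^ n) h2n
      have h2 : ((2:ℝ) ^ n) ^ ε = ((2:ℝ) ^ ε) ^ n := by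
        rw [← Real.rpow_natCast 2 n, ← Real.rpow_mul (by norm_num),
          mul_comm (n:ℝ) ε, Real.rpow_mul (by norm_num), Real.rpow_natCast]
      calc C * (b₀ (2 ^ n) / b₁ (2 ^ n)) ^ p
          ≤ C * ((M₁ / m₀) ^ (-p) * ((2:ℝ) ^ n) ^ ε) :=
            mul_le_mul_of_nonneg_left h1 hC.le
        _ = B * (2 ^ ε) ^ n := by rw [h2, hB_def]; ring
    have key2 := ENNReal.toReal_mono ENNReal.ofReal_ne_top key
    rw [ENNReal.toReal_mul, ENNReal.toReal_ofReal (by positivity),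
      ENNReal.toReal_ofReal (by positivity)] at key2
    exact key2
  have hq : 1 < (1 + θ) / (2 ^ ε) := (one_lt_div h2εpos).mpr h2εlt
  obtain ⟨n, hn⟩ := pow_unbounded_of_one_lt (B / A) hq
  rw [div_pow] at hn
  have h2e : (0:ℝ) < ((2:ℝ) ^ ε) ^ n := by positivity
  rw [div_lt_div_iff₀ hA h2e] at hn
  linarith [hfinal n]
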